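/- Let S be an n×n unitary Hermitian complex matrix (n ≥ 2) such that every diagonal entry of S equals 1 − 2/n and every off-diagonal entry has modulus 2/n. Then there exist real numbers ξ₂,…,ξₙ such that S = D⁻¹(I − (2/n)J)D, where D = diag(1, e^{iξ₂},…, e^{iξₙ}) and J is the n×n all-ones matrix. -/

import Mathlib

open Matrix Complex

lemma extremal {ι : Type*} (s : Finset ι) (c : ℝ) (z : ι → ℂ)
    (hz : ∀ k ∈ s, ‖z k‖ = c)
    (hsum : ∑ k ∈ s, z k = -((s.card * c : ℝ) : ℂ)) :
    ∀ k ∈ s, z k = -(c : ℂ) := by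
  have hre : ∑ k ∈ s, (z k).re = -(s.card * c) := by
    have := congrArg Complex.re hsum
    simpa [Complex.re_sum] using this
  have hle : ∀ k ∈ s, (fun _ => -c) k ≤ (fun k => (z k).re) k := fun k hk => by
    have h1 : |(z k).re| ≤ ‖z k‖ := Complex.abs_re_le_norm _
    rw [hz k hk] at h1
    simpa using neg_le_of_abs_le h1
  have hsumeq : ∑ k ∈ s, (fun _ => -c) k = ∑ k ∈ s, (fun k => (z k).re) k := by
    simp [hre, Finset.sum_const, mul_comm]
  have heq := (Finset.sum_eq_sum_iff_of_le hle).mp hsumeq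
  intro k hk
  have hrk : (z k).re = -c := ((heq k hk).symm)
  have habs : ‖z k‖ = c := hz k hk
  have him : (z k).im = 0 := by
    have := Complex.sq_norm (z k)
    rw [habs, Complex.normSq_apply, hrk] at this
    nlinarith [sq_nonneg (z k).im]
  apply Complex.ext <;> simp [hrk, him]

lemma expI_mul (a b : ℝ) :
    Complex.exp (Complex.I * a) * Complex.exp (Complex.I * b)
      = Complex.exp (Complex.I * ((a + b : ℝ) : ℂ)) := by
  rw [← Complex.exp_add]; congr 1; push_cast; ring

lemma expI_conj (a : ℝ) :
    (starRingEnd ℂ) (Complex.exp (Complex.I * a))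
      = Complex.exp (Complex.I * ((-a : ℝ) : ℂ)) := by
  rw [← Complex.exp_conj, RingHom.map_mul, Complex.conj_I, Complex.conj_ofReal]
  congr 1; push_cast; ring

lemma expI_abs (a : ℝ) : ‖Complex.exp (Complex.I * a)‖ = 1 := by
  rw [Complex.norm_exp]; simp

lemma expI_cancel (a : ℝ) :
    Complex.exp (Complex.I * a) * Complex.exp (Complex.I * ((-a : ℝ) : ℂ)) = 1 := by
  rw [expI_mul]; simp

/-- An n×n unitary Hermitian matrix with all diagonal entries 1−2/n and all off-diagonal
entries of modulus 2/n is diagonally equivalent to I − (2/n)J. -/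
theorem stmt_5 (n : ℕ) (hn : 2 ≤ n) (S : Matrix (Fin n) (Fin n) ℂ)
    (hu : S * Sᴴ = 1) (hh : Sᴴ = S)
    (hdiag : ∀ j, S j j = 1 - 2 / n)
    (hoff : ∀ j l, j ≠ l → ‖S j l‖ = 2 / n) :
    ∃ ξ : Fin n → ℝ, ξ ⟨0, by omega⟩ = 0 ∧
      S = (Matrix.diagonal fun j => Complex.exp (Complex.I * ξ j))⁻¹
          * (1 - (2 / n : ℂ) • Matrix.of (fun _ _ => (1 : ℂ)))
          * (Matrix.diagonal fun j => Complex.exp (Complex.I * ξ j)) := by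
  haveI : NeZero n := ⟨by omega⟩
  have hnR : (0:ℝ) < n := by positivity
  set c : ℝ := 2 / n with hc_def
  have hc : 0 < c := by positivity
  have hcc : ((c : ℂ)) = 2 / (n:ℂ) := by push_cast [hc_def]; ring
  have hcn0 : ((c:ℂ)) ≠ 0 := by
    simpa using (Complex.ofReal_ne_zero.mpr (ne_of_gt hc))
  set ξ : Fin n → ℝ := fun j => if j = 0 then 0 else Complex.arg (-(S 0 j)) with hξ_def
  have hξ0 : ξ 0 = 0 := by simp [hξ_def]
  have hherm : ∀ j l, S l j = (starRingEnd ℂ) (S j l) := by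
    intro j l
    conv_lhs => rw [← hh]
    rfl
  have key0 : ∀ l, l ≠ 0 → S 0 l = -(c:ℂ) * Complex.exp (Complex.I * ξ l) := by
    intro l hl
    have habs : ‖-(S 0 l)‖ = c := by
      rw [norm_neg]
      exact hoff 0 l (Ne.symm hl)
    have := Complex.norm_mul_exp_arg_mul_I (-(S 0 l))
    rw [habs] at this
    have hξl : ξ l = Complex.arg (-(S 0 l)) := by simp [hξ_def, hl]
    rw [hξl, mul_comm Complex.I]
    linear_combination this
  have key : ∀ j l, j ≠ l → S j l = -(c:ℂ) * Complex.exp (Complex.I * ((ξ l - ξ j : ℝ) : ℂ)) := by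
    intro j l hjl
    by_cases hj : j = 0
    · subst hj
      rw [key0 l (Ne.symm hjl), hξ0]
      norm_num
    · by_cases hl : l = 0
      · subst hl
        rw [hherm 0 j, key0 j hj, RingHom.map_mul, map_neg, Complex.conj_ofReal, expI_conj, hξ0]
        norm_num
      · have hu0j : ∑ k, S 0 k * (starRingEnd ℂ) (S j k) = 0 := by
          have := congrFun (congrFun hu 0) j
          rw [Matrix.mul_apply] at this
          simpa [Matrix.conjTranspose_apply, Matrix.one_apply, Ne.symm hj] using this
        set t : Finset (Fin n) := (Finset.univ.erase 0).erase j with ht_def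
        have hjmem : j ∈ Finset.univ.erase 0 := by simp [hj]
        have hsplit : ∑ k, S 0 k * (starRingEnd ℂ) (S j k)
            = S 0 0 * (starRingEnd ℂ) (S j 0) + (S 0 j * (starRingEnd ℂ) (S j j)
              + ∑ k ∈ t, S 0 k * (starRingEnd ℂ) (S j k)) := by
          rw [← Finset.add_sum_erase _ _ (Finset.mem_univ 0),
            ← Finset.add_sum_erase _ _ hjmem]
        have hS00 : S 0 0 = 1 - (c:ℂ) := by rw [hdiag 0, hcc]
        have hSjj : S j j = 1 - (c:ℂ) := by rw [hdiag j, hcc]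
        have hSj0 : (starRingEnd ℂ) (S j 0) = S 0 j := by rw [hherm 0 j]; simp
        have hS0j : S 0 j = -(c:ℂ) * Complex.exp (Complex.I * ξ j) := key0 j hj
        have hconj1c : (starRingEnd ℂ) (1 - (c:ℂ)) = 1 - (c:ℂ) := by
          simp [Complex.conj_ofReal]
        have hsum_t : ∑ k ∈ t, S 0 k * (starRingEnd ℂ) (S j k)
            = 2 * (c:ℂ) * (1 - (c:ℂ)) * Complex.exp (Complex.I * ξ j) := by
          have h1 := hu0j
          rw [hsplit, hS00, hSjj, hconj1c, hSj0, hS0j] at h1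
          linear_combination h1
        set z : Fin n → ℂ := fun k =>
          Complex.exp (Complex.I * ((-ξ j : ℝ) : ℂ)) * Complex.exp (Complex.I * ξ k)
            * (starRingEnd ℂ) (S j k) with hz_def
        have hzmem : ∀ k ∈ t, z k = Complex.exp (Complex.I * ((-ξ j : ℝ) : ℂ)) * (-(c:ℂ))⁻¹
            * (S 0 k * (starRingEnd ℂ) (S j k)) := by
          intro k hk
          have hk0 : k ≠ 0 := (Finset.mem_erase.mp (Finset.mem_erase.mp hk).2).1
          rw [hz_def, key0 k hk0]
          field_simp
        have hcard : t.card = n - 2 := by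
          rw [ht_def, Finset.card_erase_of_mem hjmem, Finset.card_erase_of_mem (Finset.mem_univ 0)]
          simp only [Finset.card_univ, Fintype.card_fin]
          omega
        have hn2 : (((n - 2 : ℕ) : ℝ) * c : ℝ) = 2 * (1 - c) := by
          have h2 : ((n - 2 : ℕ) : ℝ) = (n : ℝ) - 2 := by
            push_cast [Nat.cast_sub hn]; ring
          rw [h2, hc_def]; field_simp
        have hcast : ((((n - 2 : ℕ) : ℝ) * c : ℝ) : ℂ) = 2 * (1 - (c:ℂ)) := by
          rw [hn2]; push_cast; ring
        have hexp : Complex.exp (Complex.I * ((-ξ j : ℝ) : ℂ)) * Complex.exp (Complex.I * ξ j) = 1 := by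
          rw [mul_comm]; exact expI_cancel (ξ j)
        have hzsum : ∑ k ∈ t, z k = -((t.card * c : ℝ) : ℂ) := by
          rw [Finset.sum_congr rfl hzmem, ← Finset.mul_sum, hsum_t, hcard, hcast]
          have h1 : Complex.exp (Complex.I * ((-ξ j : ℝ) : ℂ)) * (-(c:ℂ))⁻¹
              * (2 * (c:ℂ) * (1 - (c:ℂ)) * Complex.exp (Complex.I * ξ j))
              = (-(c:ℂ))⁻¹ * (2 * (c:ℂ) * (1 - (c:ℂ)))
                * (Complex.exp (Complex.I * ((-ξ j : ℝ) : ℂ)) * Complex.exp (Complex.I * ξ j)) := by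
            ring
          rw [h1, hexp, mul_one]
          field_simp
        have hzabs : ∀ k ∈ t, ‖z k‖ = c := by
          intro k hk
          have hkj : k ≠ j := (Finset.mem_erase.mp hk).1
          rw [hz_def]
          simp only [norm_mul, Complex.norm_conj, expI_abs]
          rw [hoff j k (Ne.symm hkj)]
          ring
        have hzl : Complex.exp (Complex.I * ((-ξ j : ℝ) : ℂ)) * Complex.exp (Complex.I * ξ l)
            * (starRingEnd ℂ) (S j l) = -(c:ℂ) :=
          extremal t c z hzabs hzsum l (by rw [ht_def]; simp [Ne.symm hjl, hl])
        have h5 := congrArg (starRingEnd ℂ) hzl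
        simp only [_root_.map_mul, map_neg, Complex.conj_ofReal, expI_conj, neg_neg,
          Complex.conj_conj] at h5
        -- h5 : exp(I*ξj) * exp(I*(-ξl)) * S j l = -c
        have e3 : Complex.exp (Complex.I * ((ξ j : ℝ) : ℂ))
            * Complex.exp (Complex.I * ((-ξ j : ℝ) : ℂ)) = 1 := expI_cancel _
        have e4 : Complex.exp (Complex.I * ((ξ l : ℝ) : ℂ))
            * Complex.exp (Complex.I * ((-ξ l : ℝ) : ℂ)) = 1 := expI_cancel _
        have e5 : Complex.exp (Complex.I * ((-ξ j : ℝ) : ℂ)) * Complex.exp (Complex.I * ξ l)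
            = Complex.exp (Complex.I * ((ξ l - ξ j : ℝ) : ℂ)) := by
          rw [expI_mul]; congr 2; push_cast; ring
        -- from h5 : A * D * S = -c where A = exp(Iξj), D = exp(I(-ξl))
        -- goal : S = -c * exp(I(ξl - ξj)) = -c * B * C with B = exp(I(-ξj)), C = exp(Iξl)
        rw [← e5]
        linear_combination (Complex.exp (Complex.I * ((-ξ j : ℝ) : ℂ))
            * Complex.exp (Complex.I * ((ξ l : ℝ) : ℂ))) * h5
          - S j l * e3
          - S j l * Complex.exp (Complex.I * ((ξ j : ℝ) : ℂ))
            * Complex.exp (Complex.I * ((-ξ j : ℝ) : ℂ)) * e4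
  refine ⟨ξ, ?_, ?_⟩
  · have h0 : (⟨0, by omega⟩ : Fin n) = 0 := by
      apply Fin.ext; simp
    rw [h0, hξ0]
  · have hone : (fun j : Fin n => Complex.exp (Complex.I * ((-ξ j : ℝ) : ℂ))
        * Complex.exp (Complex.I * ξ j)) = fun _ => (1:ℂ) := by
      funext j
      rw [mul_comm]
      exact expI_cancel (ξ j)
    have hinv : (Matrix.diagonal fun j => Complex.exp (Complex.I * ξ j))⁻¹
        = Matrix.diagonal fun j => Complex.exp (Complex.I * ((-ξ j : ℝ) : ℂ)) := by
      apply Matrix.inv_eq_left_inv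
      rw [Matrix.diagonal_mul_diagonal, hone, Matrix.diagonal_one]
    rw [hinv]
    ext j l
    rw [Matrix.mul_diagonal, Matrix.diagonal_mul]
    simp only [Matrix.sub_apply, Matrix.one_apply, Matrix.smul_apply, Matrix.of_apply,
      smul_eq_mul, mul_one]
    by_cases hjl : j = l
    · subst hjl
      rw [if_pos rfl, hdiag j]
      have h1 : Complex.exp (Complex.I * ((-ξ j : ℝ) : ℂ)) * Complex.exp (Complex.I * ξ j) = 1 := by
        rw [mul_comm]; exact expI_cancel (ξ j)
      linear_combination (2 / (n:ℂ) - 1) * h1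
    · rw [if_neg hjl, key j l hjl, hcc]
      have e5 : Complex.exp (Complex.I * ((-ξ j : ℝ) : ℂ)) * Complex.exp (Complex.I * ξ l)
          = Complex.exp (Complex.I * ((ξ l - ξ j : ℝ) : ℂ)) := by
        rw [expI_mul]; congr 2; push_cast; ring
      linear_combination (2/(n:ℂ)) * e5
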